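/- arXiv:1708.02820 — 6 statements merged into one kernel-verified Lean document; each statement's English description precedes it below -/
import Mathlib

section
/- For all natural numbers n, m, ℓ with m < ℓ, the identity ∑_{k=0}^{m} C(m,k) · C(ℓ−k+n, n) = (1/n!) · (d^n/dx^n)[(x+1)^{ℓ+n−m} (x+2)^m]|_{x=0} holds, where the right-hand side is the n-th iterated derivative at 0 of the real function x ↦ (x+1)^{ℓ+n−m}(x+2)^m. (This is the formula χ_{m<ℓ}(n|m;ℓ) of Theorem 3.1, computing h^0(O_{P^{n|m}}(ℓ)) in the case m < ℓ.) -/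
open Polynomial

lemma iteratedDeriv_eval (p : Polynomial ℝ) (n : ℕ) :
    iteratedDeriv n (fun x => p.eval x) =
      fun x => ((Polynomial.derivative)^[n] p).eval x := by
  induction n with
  | zero => simp
  | succ n ih =>
      rw [iteratedDeriv_succ, ih, Function.iterate_succ_apply']
      funext x
      exact Polynomial.deriv _

theorem stmt_0 (n m ℓ : ℕ) (h : m < ℓ) :
    ((∑ k ∈ Finset.range (m + 1), m.choose k * (ℓ - k + n).choose n : ℕ) : ℝ) =
      (1 / (n.factorial : ℝ)) *
        iteratedDeriv n (fun x : ℝ => (x + 1) ^ (ℓ + n - m) * (x + 2) ^ m) 0 := by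
  have hp : (fun x : ℝ => (x + 1) ^ (ℓ + n - m) * (x + 2) ^ m) =
      fun x => ((X + C 1) ^ (ℓ + n - m) * (X + C 2) ^ m : Polynomial ℝ).eval x := by
    funext x; simp
  have hpoly : ((X + C 1 : Polynomial ℝ) ^ (ℓ + n - m) * (X + C 2) ^ m : Polynomial ℝ)
      = ∑ k ∈ Finset.range (m + 1), (m.choose k) • (X + C 1 : Polynomial ℝ) ^ (ℓ + n - m + k) := by
    have h2 : (X + C 2 : Polynomial ℝ) = (X + C 1) + C 1 := by
      rw [show (2 : ℝ) = 1 + 1 by norm_num, C_add]; ring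
    rw [h2, add_pow (X + C 1 : Polynomial ℝ) (C 1) m, Finset.mul_sum]
    refine Finset.sum_congr rfl fun k hk => ?_
    simp only [C_1, one_pow, mul_one, nsmul_eq_mul, pow_add]
    ring
  rw [hp, iteratedDeriv_eval, hpoly]
  rw [Polynomial.iterate_derivative_sum]
  simp only [Polynomial.iterate_derivative_smul, Polynomial.iterate_derivative_X_add_pow,
    Polynomial.eval_smul, Polynomial.eval_pow, Polynomial.eval_add, Polynomial.eval_X,
    Polynomial.eval_C, Polynomial.eval_finset_sum, smul_eq_mul]
  rw [← Finset.sum_range_reflect]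
  push_cast
  rw [Finset.mul_sum]
  refine Finset.sum_congr rfl fun k hk => ?_
  have hk' : k ≤ m := Nat.lt_succ_iff.mp (Finset.mem_range.mp hk)
  have h1 : m.choose (m - k) = m.choose k := Nat.choose_symm hk'
  have h2 : ℓ - (m - k) + n = ℓ + n - m + k := by omega
  rw [h1, h2]
  rw [Nat.descFactorial_eq_factorial_mul_choose]
  simp only [zero_add, one_pow, mul_one]
  have hf : (n.factorial : ℝ) ≠ 0 := by positivity
  field_simp
  simp only [nsmul_eq_mul, mul_one]
  push_cast
  ring
end

section
/- For all natural numbers n, m, ℓ with ℓ ≤ m ≤ ℓ + n, the identity ∑_{k=0}^{ℓ} C(m,k) · C(ℓ−k+n, n) = (m!/(n!·ℓ!)) · (d^{ℓ+n−m}/dx^{ℓ+n−m})[(x+1)^{n} (x+2)^{ℓ}]|_{x=0} holds, where the right-hand side involves the (ℓ+n−m)-th iterated derivative at 0 of the real function x ↦ (x+1)^n (x+2)^ℓ. (This is the formula χ_{m≥ℓ}(n|m;ℓ) of Theorem 3.1, computing h^0(O_{P^{n|m}}(ℓ)) in the case m ≥ ℓ.) -/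
open Finset

lemma aux_iterDeriv_sum_pow (c : ℝ) (N : ℕ) (a : ℕ → ℝ) (e : ℕ → ℕ) (D : ℕ) :
    iteratedDeriv D (fun x : ℝ => ∑ k ∈ Finset.range N, a k * (x + c) ^ e k) =
      fun x => ∑ k ∈ Finset.range N, a k * ((e k).descFactorial D : ℝ) * (x + c) ^ (e k - D) := by
  induction D with
  | zero => simp
  | succ D ih =>
    rw [iteratedDeriv_succ, ih]
    funext x
    have hdiff : ∀ k ∈ Finset.range N, DifferentiableAt ℝ
        (fun x : ℝ => a k * ((e k).descFactorial D : ℝ) * (x + c) ^ (e k - D)) x := by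
      intro k _
      exact (((differentiable_id.add_const c).pow _).const_mul _).differentiableAt
    rw [deriv_fun_sum hdiff]
    apply Finset.sum_congr rfl
    intro k _
    have h1 : HasDerivAt (fun x : ℝ => (x + c) ^ (e k - D))
        (((e k - D : ℕ) : ℝ) * (x + c) ^ (e k - D - 1)) x := by
      simpa using ((hasDerivAt_id x).add_const c).fun_pow (e k - D)
    rw [(h1.const_mul (a k * ((e k).descFactorial D : ℝ))).deriv]
    rw [Nat.descFactorial_succ]
    have : e k - D - 1 = e k - (D + 1) := by omega
    rw [this]
    push_cast
    ring

theorem stmt_1 (n m ℓ : ℕ) (h1 : ℓ ≤ m) (h2 : m ≤ ℓ + n) :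
    ((∑ k ∈ Finset.range (ℓ + 1), m.choose k * (ℓ - k + n).choose n : ℕ) : ℝ) =
      ((m.factorial : ℝ) / ((n.factorial : ℝ) * (ℓ.factorial : ℝ))) *
        iteratedDeriv (ℓ + n - m) (fun x : ℝ => (x + 1) ^ n * (x + 2) ^ ℓ) 0 := by
  have hf : (fun x : ℝ => (x + 1) ^ n * (x + 2) ^ ℓ) =
      fun x : ℝ => ∑ k ∈ Finset.range (ℓ + 1),
        ((ℓ.choose k : ℝ)) * (x + 1) ^ (n + k) := by
    funext x
    have hexp : ((x + 1 : ℝ) + 1) ^ ℓ = ∑ k ∈ Finset.range (ℓ + 1),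
        (ℓ.choose k : ℝ) * (x + 1) ^ k := by
      rw [add_pow]
      exact Finset.sum_congr rfl fun k _ => by ring
    have h2' : (x + 2 : ℝ) = (x + 1) + 1 := by ring
    rw [h2', hexp, Finset.mul_sum]
    exact Finset.sum_congr rfl fun k _ => by rw [pow_add]; ring
  rw [hf, aux_iterDeriv_sum_pow]
  beta_reduce
  have h0 : ∀ k ∈ Finset.range (ℓ + 1),
      (ℓ.choose k : ℝ) * ((n + k).descFactorial (ℓ + n - m) : ℝ) *
        ((0 : ℝ) + 1) ^ (n + k - (ℓ + n - m)) =
      (ℓ.choose k : ℝ) * ((n + k).descFactorial (ℓ + n - m) : ℝ) := by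
    intro k _; simp
  rw [Finset.sum_congr rfl h0]
  rw [Finset.mul_sum, Nat.cast_sum]
  rw [← Finset.sum_range_reflect (fun k => ((m.choose k * (ℓ - k + n).choose n : ℕ) : ℝ))]
  apply Finset.sum_congr rfl
  intro k hk
  rw [Finset.mem_range] at hk
  have hkℓ : k ≤ ℓ := by omega
  have hsimp : ℓ + 1 - 1 - k = ℓ - k := by omega
  have hsimp2 : ℓ - (ℓ - k) = k := by omega
  rw [hsimp, hsimp2]
  have hDle : ℓ + n - m ≤ n + k := by omega
  have hsub : n + k - (ℓ + n - m) = m - (ℓ - k) := by omega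
  have hdesc : ((n + k).descFactorial (ℓ + n - m) : ℝ) =
      ((n + k).factorial : ℝ) / ((m - (ℓ - k)).factorial : ℝ) := by
    rw [eq_div_iff (by positivity), mul_comm, ← hsub, ← Nat.cast_mul,
      Nat.factorial_mul_descFactorial hDle]
  rw [hdesc]
  rw [Nat.cast_mul, Nat.cast_choose ℝ (show ℓ - k ≤ m by omega),
    Nat.cast_choose ℝ (show n ≤ k + n by omega), Nat.cast_choose ℝ hkℓ]
  have e1 : k + n - n = k := by omega
  rw [e1]
  have e2 : (k + n : ℕ) = n + k := by omega
  rw [e2]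
  have h3 : ((m - (ℓ - k)).factorial : ℝ) ≠ 0 := by positivity
  field_simp
end

section
/- For all natural numbers n, m and every natural number j ≥ 1, the identity ∑_{k=0}^{m} C(m,k) · C(k+j−1, n) = (1/n!) · (d^n/dx^n)[(x+1)^{j−1} (x+2)^{m}]|_{x=0} holds, where the right-hand side is the n-th iterated derivative at 0 of the real function x ↦ (x+1)^{j−1}(x+2)^m. (Writing ℓ = −j, this is the formula ζ_{ℓ+n+1≤0}(n|m;ℓ) of Theorem 3.1, computing h^n(O_{P^{n|m}}(ℓ)) for negative twist ℓ.) -/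
lemma sum_pow_iteratedDeriv (s : Finset ℕ) (c : ℕ → ℝ) (p : ℕ → ℕ) (n : ℕ) :
    iteratedDeriv n (fun x : ℝ => ∑ k ∈ s, c k * (x + 1) ^ (p k)) =
      fun x => ∑ k ∈ s, c k * ((p k).descFactorial n : ℝ) * (x + 1) ^ (p k - n) := by
  induction n with
  | zero => simp [mul_assoc]
  | succ n ih =>
      rw [iteratedDeriv_succ, ih]
      funext x
      rw [deriv_fun_sum (fun k _ => by fun_prop)]
      refine Finset.sum_congr rfl fun k _ => ?_
      have : deriv (fun x : ℝ => c k * ((p k).descFactorial n : ℝ) * (x + 1) ^ (p k - n)) x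
          = c k * ((p k).descFactorial n : ℝ) * (((p k - n : ℕ) : ℝ) * (x + 1) ^ (p k - n - 1)) := by
        rw [deriv_const_mul _ (by fun_prop)]
        congr 1
        have h2 : deriv (fun x : ℝ => (x + 1) ^ (p k - n)) x
            = ((p k - n : ℕ) : ℝ) * (x + 1) ^ (p k - n - 1) * deriv (fun x : ℝ => x + 1) x :=
          deriv_fun_pow (differentiableAt_id.add_const 1) _
        simp [h2]
      rw [this, Nat.descFactorial_succ, Nat.cast_mul, Nat.sub_sub]
      ring

theorem stmt_2 (n m j : ℕ) (hj : 1 ≤ j) :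
    ((∑ k ∈ Finset.range (m + 1), m.choose k * (k + j - 1).choose n : ℕ) : ℝ) =
      (1 / (n.factorial : ℝ)) *
        iteratedDeriv n (fun x : ℝ => (x + 1) ^ (j - 1) * (x + 2) ^ m) 0 := by
  have hf : (fun x : ℝ => (x + 1) ^ (j - 1) * (x + 2) ^ m) =
      fun x : ℝ => ∑ k ∈ Finset.range (m + 1), (m.choose k : ℝ) * (x + 1) ^ (k + (j - 1)) := by
    funext x
    have h2 : ((x : ℝ) + 2) ^ m = ∑ k ∈ Finset.range (m + 1), (x + 1) ^ k * (m.choose k : ℝ) := by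
      have h3 := add_pow (x + 1) (1 : ℝ) m
      have h4 : (x : ℝ) + 2 = x + 1 + 1 := by ring
      rw [h4, h3]
      simp
    rw [h2, Finset.mul_sum]
    refine Finset.sum_congr rfl fun k _ => ?_
    rw [pow_add]
    ring
  rw [hf, sum_pow_iteratedDeriv]
  push_cast
  rw [Finset.mul_sum]
  refine Finset.sum_congr rfl fun k _ => ?_
  have h1 : k + j - 1 = k + (j - 1) := by omega
  rw [h1, Nat.descFactorial_eq_factorial_mul_choose]
  have hn : (n.factorial : ℝ) ≠ 0 := by positivity
  push_cast
  field_simp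
  ring
end

section
/- For all natural numbers n, m, the identity ∑_{k=n+1}^{m} C(m,k) · C(k−1, n) = (1/n!) · (d^n/dx^n)[ ((x+2)^m − 1)/(x+1) ]|_{x=0} holds, where the right-hand side is the n-th iterated derivative at 0 of the real function x ↦ ((x+2)^m − 1)/(x+1). (This is the paper's closed formula for h^n(O_{P^{n|m}}), used in the even Picard group computation; it is the case ℓ = 0 of the formula ζ_{ℓ+n+1>0}.) -/
open Polynomial in
lemma iteratedDeriv_polynomial_eval (p : ℝ[X]) (n : ℕ) :
    iteratedDeriv n (fun x : ℝ => p.eval x) = fun x => (derivative^[n] p).eval x := by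
  induction n with
  | zero => simp only [iteratedDeriv_zero, Function.iterate_zero_apply]
  | succ k ih =>
      rw [iteratedDeriv_succ, ih, Function.iterate_succ_apply']
      funext x
      exact Polynomial.deriv _

open Polynomial in
theorem stmt_6 (n m : ℕ) :
    ((∑ k ∈ Finset.Icc (n + 1) m, m.choose k * (k - 1).choose n : ℕ) : ℝ) =
      (1 / (n.factorial : ℝ)) *
        iteratedDeriv n (fun x : ℝ => ((x + 2) ^ m - 1) / (x + 1)) 0 := by
  set p : ℝ[X] := ∑ k ∈ Finset.Icc 1 m, (m.choose k : ℝ[X]) * (X + 1) ^ (k - 1) with hp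
  have herase : (Finset.range (m + 1)).erase 0 = Finset.Icc 1 m := by
    ext k; simp [Finset.mem_erase, Nat.lt_succ_iff]; omega
  have hcong : iteratedDeriv n (fun x : ℝ => ((x + 2) ^ m - 1) / (x + 1)) 0
      = iteratedDeriv n (fun x : ℝ => p.eval x) 0 := by
    apply Filter.EventuallyEq.iteratedDeriv_eq
    have hmem : {x : ℝ | x ≠ -1} ∈ nhds (0 : ℝ) :=
      IsOpen.mem_nhds isOpen_ne (by norm_num)
    filter_upwards [hmem] with x hx
    have hx1 : x + 1 ≠ 0 := by intro h; apply hx; linarith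
    rw [div_eq_iff hx1, hp]
    simp only [Polynomial.eval_finset_sum, Polynomial.eval_mul, Polynomial.eval_pow,
      Polynomial.eval_add, Polynomial.eval_X, Polynomial.eval_one, Polynomial.eval_natCast]
    rw [Finset.sum_mul]
    have hterm : ∀ k ∈ Finset.Icc 1 m, (m.choose k : ℝ) * (x + 1) ^ (k - 1) * (x + 1)
        = (x + 1) ^ k * (m.choose k : ℝ) := by
      intro k hk
      rcases Finset.mem_Icc.mp hk with ⟨h1, _⟩
      rw [mul_assoc, ← pow_succ, Nat.sub_add_cancel h1, mul_comm]
    rw [Finset.sum_congr rfl hterm]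
    have hbin : (x + 2 : ℝ) ^ m = ∑ k ∈ Finset.range (m + 1),
        (x + 1) ^ k * (m.choose k : ℝ) := by
      have h := add_pow (x + 1 : ℝ) 1 m
      rw [show (x + 2 : ℝ) = x + 1 + 1 by ring]
      simpa using h
    rw [hbin, ← Finset.sum_erase_add _ _ (Finset.mem_range.mpr (Nat.succ_pos m)), herase]
    simp
  rw [hcong, iteratedDeriv_polynomial_eval]
  have hder : derivative^[n] p
      = ∑ k ∈ Finset.Icc 1 m, (m.choose k : ℝ[X]) *
          ((k - 1).descFactorial n • (X + 1) ^ (k - 1 - n)) := by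
    rw [hp, iterate_derivative_sum]
    refine Finset.sum_congr rfl fun k _ => ?_
    rw [iterate_derivative_natCast_mul]
    congr 1
    have := iterate_derivative_X_add_pow (k - 1) n (1 : ℝ)
    simpa using this
  rw [hder]
  simp only [Polynomial.eval_finset_sum, Polynomial.eval_mul, Polynomial.eval_smul,
    Polynomial.eval_pow, Polynomial.eval_add, Polynomial.eval_X, Polynomial.eval_one,
    Polynomial.eval_natCast, smul_eq_mul, zero_add, one_pow, mul_one]
  have hsplit : ∑ k ∈ Finset.Icc 1 m, (m.choose k : ℝ) * ((k - 1).descFactorial n : ℝ)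
      = ∑ k ∈ Finset.Icc (n + 1) m, (m.choose k : ℝ) * ((k - 1).descFactorial n : ℝ) := by
    refine (Finset.sum_subset ?_ ?_).symm
    · intro k hk
      rcases Finset.mem_Icc.mp hk with ⟨h1, h2⟩
      exact Finset.mem_Icc.mpr ⟨by omega, h2⟩
    · intro k hk hk'
      rcases Finset.mem_Icc.mp hk with ⟨h1, h2⟩
      have hlt : k - 1 < n := by
        simp only [Finset.mem_Icc, not_and, not_le] at hk'
        omega
      rw [Nat.descFactorial_eq_zero_iff_lt.mpr hlt]
      simp
  have hfac : ∑ k ∈ Finset.Icc (n + 1) m, (m.choose k : ℝ) * ((k - 1).descFactorial n : ℝ)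
      = (n.factorial : ℝ) * ∑ k ∈ Finset.Icc (n + 1) m,
          (m.choose k : ℝ) * ((k - 1).choose n : ℝ) := by
    rw [Finset.mul_sum]
    refine Finset.sum_congr rfl fun k _ => ?_
    rw [← Nat.cast_mul, Nat.descFactorial_eq_factorial_mul_choose]
    push_cast
    ring
  simp only [nsmul_eq_mul, mul_one]
  rw [hsplit, hfac]
  have hne : (n.factorial : ℝ) ≠ 0 := Nat.cast_ne_zero.mpr n.factorial_ne_zero
  push_cast
  field_simp
end

section
/- For all natural numbers n, m, the identity ∑_{k=n+2}^{m} C(m,k) · C(k−2, n) = (1/n!) · (d^n/dx^n)[ (x+2)^m/(x+1)^2 ]|_{x=0} − (−1)^n (m+n+1) holds, where the derivative term is the n-th iterated derivative at 0 of the real function x ↦ (x+2)^m/(x+1)^2. (This is the paper's closed formula for h^n(O_{P^{n|m}}(+1)^{⊕ n+1|m}) divided by the multiplicity n+m+1, used in the tangent-sheaf cohomology computation via the Euler sequence.) -/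
open Finset

/-- Closed formula for the iterated derivatives of
`y ↦ ∑ C(m,j) y^(j-2) + m/y + 1/y²` away from `0`. -/
private lemma aux_deriv (m : ℕ) : ∀ (n : ℕ) (y : ℝ), y ≠ 0 →
    iteratedDeriv n (fun y : ℝ =>
        (∑ j ∈ Finset.Icc 2 m, (m.choose j : ℝ) * y ^ (j - 2)) + (m : ℝ) * y⁻¹ + (y ^ 2)⁻¹) y =
      (∑ j ∈ Finset.Icc 2 m,
          (m.choose j : ℝ) * ((j - 2).descFactorial n : ℝ) * y ^ (j - 2 - n))
        + (m : ℝ) * (-1) ^ n * (n.factorial : ℝ) * (y ^ (n + 1))⁻¹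
        + (-1) ^ n * ((n + 1).factorial : ℝ) * (y ^ (n + 2))⁻¹ := by
  intro n
  induction n with
  | zero =>
    intro y hy
    simp [iteratedDeriv_zero, pow_one]
  | succ n ih =>
    intro y hy
    rw [iteratedDeriv_succ]
    have hev : iteratedDeriv n (fun y : ℝ =>
        (∑ j ∈ Finset.Icc 2 m, (m.choose j : ℝ) * y ^ (j - 2)) + (m : ℝ) * y⁻¹ + (y ^ 2)⁻¹)
        =ᶠ[nhds y] (fun z : ℝ =>
          (∑ j ∈ Finset.Icc 2 m,
              (m.choose j : ℝ) * ((j - 2).descFactorial n : ℝ) * z ^ (j - 2 - n))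
            + (m : ℝ) * (-1) ^ n * (n.factorial : ℝ) * (z ^ (n + 1))⁻¹
            + (-1) ^ n * ((n + 1).factorial : ℝ) * (z ^ (n + 2))⁻¹) := by
      filter_upwards [isOpen_compl_singleton.mem_nhds
        (show y ∈ ({(0 : ℝ)}ᶜ : Set ℝ) from hy)] with z hz
      exact ih z hz
    rw [hev.deriv_eq]
    have h1 : HasDerivAt (fun z : ℝ => ∑ j ∈ Finset.Icc 2 m,
          (m.choose j : ℝ) * ((j - 2).descFactorial n : ℝ) * z ^ (j - 2 - n))
        (∑ j ∈ Finset.Icc 2 m, (m.choose j : ℝ) * ((j - 2).descFactorial n : ℝ) *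
          (((j - 2 - n : ℕ) : ℝ) * y ^ (j - 2 - n - 1))) y :=
      HasDerivAt.fun_sum fun j _ => (hasDerivAt_pow _ y).const_mul _
    have h2 : HasDerivAt (fun z : ℝ => (m : ℝ) * (-1) ^ n * (n.factorial : ℝ) * (z ^ (n + 1))⁻¹)
        ((m : ℝ) * (-1) ^ n * (n.factorial : ℝ) *
          (-(((n + 1 : ℕ) : ℝ) * y ^ (n + 1 - 1)) / (y ^ (n + 1)) ^ 2)) y :=
      ((hasDerivAt_pow (n + 1) y).inv (pow_ne_zero _ hy)).const_mul _
    have h3 : HasDerivAt (fun z : ℝ => (-1) ^ n * ((n + 1).factorial : ℝ) * (z ^ (n + 2))⁻¹)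
        ((-1) ^ n * ((n + 1).factorial : ℝ) *
          (-(((n + 2 : ℕ) : ℝ) * y ^ (n + 2 - 1)) / (y ^ (n + 2)) ^ 2)) y :=
      ((hasDerivAt_pow (n + 2) y).inv (pow_ne_zero _ hy)).const_mul _
    have H := ((h1.fun_add h2).fun_add h3).deriv
    rw [H]
    have hsum : (∑ j ∈ Finset.Icc 2 m, (m.choose j : ℝ) * ((j - 2).descFactorial n : ℝ) *
          (((j - 2 - n : ℕ) : ℝ) * y ^ (j - 2 - n - 1)))
        = ∑ j ∈ Finset.Icc 2 m,
            (m.choose j : ℝ) * ((j - 2).descFactorial (n + 1) : ℝ) * y ^ (j - 2 - (n + 1)) := by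
      refine Finset.sum_congr rfl fun j _ => ?_
      rw [Nat.descFactorial_succ, show j - 2 - (n + 1) = j - 2 - n - 1 by omega]
      push_cast
      ring
    have hB : (m : ℝ) * (-1) ^ n * (n.factorial : ℝ) *
          (-(((n + 1 : ℕ) : ℝ) * y ^ (n + 1 - 1)) / (y ^ (n + 1)) ^ 2)
        = (m : ℝ) * (-1) ^ (n + 1) * ((n + 1).factorial : ℝ) * (y ^ (n + 1 + 1))⁻¹ := by
      rw [Nat.factorial_succ, show n + 1 - 1 = n from rfl]
      push_cast
      field_simp
      ring
    have hC : (-1 : ℝ) ^ n * ((n + 1).factorial : ℝ) *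
          (-(((n + 2 : ℕ) : ℝ) * y ^ (n + 2 - 1)) / (y ^ (n + 2)) ^ 2)
        = (-1) ^ (n + 1) * ((n + 1 + 1).factorial : ℝ) * (y ^ (n + 1 + 2))⁻¹ := by
      rw [show (n + 1 + 1).factorial = (n + 2) * (n + 1).factorial from rfl,
        show n + 2 - 1 = n + 1 from rfl]
      push_cast
      field_simp
      ring
    rw [hsum, hB, hC]

/-- Partial fraction decomposition of `(x+2)^m/(x+1)^2`. -/
private lemma aux_eq (m : ℕ) {x : ℝ} (hx : x + 1 ≠ 0) :
    (x + 2) ^ m / (x + 1) ^ 2 =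
      (∑ j ∈ Finset.Icc 2 m, (m.choose j : ℝ) * (x + 1) ^ (j - 2))
        + (m : ℝ) * (x + 1)⁻¹ + ((x + 1) ^ 2)⁻¹ := by
  have hbin : ((x + 1) + 1) ^ m
      = ∑ j ∈ Finset.range (m + 1), (x + 1) ^ j * (m.choose j : ℝ) := by
    rw [add_pow]; simp
  have hsplit : (∑ j ∈ Finset.range (m + 1), (x + 1) ^ j * (m.choose j : ℝ))
      = 1 + (m : ℝ) * (x + 1) + ∑ j ∈ Finset.Icc 2 m, (x + 1) ^ j * (m.choose j : ℝ) := by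
    rcases Nat.eq_zero_or_pos m with hm | hm
    · subst hm; simp
    · rw [Finset.range_eq_Ico,
        ← Finset.sum_Ico_consecutive _ (by omega : (0 : ℕ) ≤ 2) (by omega : 2 ≤ m + 1),
        Finset.Ico_add_one_right_eq_Icc, show Finset.Ico 0 2 = Finset.Icc 0 1 from Finset.Ico_add_one_right_eq_Icc 0 1, show Finset.Icc 0 1 = {0, 1} from rfl]
      simp [Nat.choose_one_right]
      ring
  have hpow : (∑ j ∈ Finset.Icc 2 m, (m.choose j : ℝ) * (x + 1) ^ (j - 2)) * (x + 1) ^ 2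
      = ∑ j ∈ Finset.Icc 2 m, (x + 1) ^ j * (m.choose j : ℝ) := by
    rw [Finset.sum_mul]
    refine Finset.sum_congr rfl fun j hj => ?_
    have h2j : 2 ≤ j := (Finset.mem_Icc.mp hj).1
    rw [mul_assoc, ← pow_add, Nat.sub_add_cancel h2j, mul_comm]
  have key : (x + 2) ^ m
      = (∑ j ∈ Finset.Icc 2 m, (m.choose j : ℝ) * (x + 1) ^ (j - 2)) * (x + 1) ^ 2
        + (m : ℝ) * (x + 1) + 1 := by
    rw [show x + 2 = (x + 1) + 1 by ring, hbin, hsplit, hpow]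
    ring
  rw [key]
  field_simp

theorem stmt_7 (n m : ℕ) :
    ((∑ k ∈ Finset.Icc (n + 2) m, m.choose k * (k - 2).choose n : ℕ) : ℝ) =
      (1 / (n.factorial : ℝ)) *
          iteratedDeriv n (fun x : ℝ => (x + 2) ^ m / (x + 1) ^ 2) 0 -
        (-1) ^ n * ((m : ℝ) + (n : ℝ) + 1) := by
  have h0 : iteratedDeriv n (fun x : ℝ => (x + 2) ^ m / (x + 1) ^ 2) 0
      = iteratedDeriv n (fun x : ℝ =>
          (∑ j ∈ Finset.Icc 2 m, (m.choose j : ℝ) * (x + 1) ^ (j - 2))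
            + (m : ℝ) * (x + 1)⁻¹ + ((x + 1) ^ 2)⁻¹) 0 := by
    apply Filter.EventuallyEq.iteratedDeriv_eq
    filter_upwards [isOpen_compl_singleton.mem_nhds
      (show (0 : ℝ) ∈ ({(-1 : ℝ)}ᶜ : Set ℝ) by norm_num)] with x hx
    exact aux_eq m (fun h => hx (Set.mem_singleton_iff.mpr (by linarith)))
  have hshift : iteratedDeriv n (fun x : ℝ =>
        (∑ j ∈ Finset.Icc 2 m, (m.choose j : ℝ) * (x + 1) ^ (j - 2))
          + (m : ℝ) * (x + 1)⁻¹ + ((x + 1) ^ 2)⁻¹) 0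
      = iteratedDeriv n (fun y : ℝ =>
          (∑ j ∈ Finset.Icc 2 m, (m.choose j : ℝ) * y ^ (j - 2))
            + (m : ℝ) * y⁻¹ + (y ^ 2)⁻¹) (0 + 1) :=
    congrFun (iteratedDeriv_comp_add_const n (fun y : ℝ =>
      (∑ j ∈ Finset.Icc 2 m, (m.choose j : ℝ) * y ^ (j - 2))
        + (m : ℝ) * y⁻¹ + (y ^ 2)⁻¹) 1) 0
  have hval := aux_deriv m n 1 one_ne_zero
  rw [h0, hshift, show (0 : ℝ) + 1 = 1 by norm_num, hval]
  simp only [one_pow, inv_one, mul_one]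
  -- rewrite descFactorial via choose
  have hdesc : (∑ j ∈ Finset.Icc 2 m,
        (m.choose j : ℝ) * ((j - 2).descFactorial n : ℝ))
      = (n.factorial : ℝ) * ∑ j ∈ Finset.Icc 2 m,
        (m.choose j : ℝ) * ((j - 2).choose n : ℝ) := by
    rw [Finset.mul_sum]
    refine Finset.sum_congr rfl fun j _ => ?_
    rw [Nat.descFactorial_eq_factorial_mul_choose]
    push_cast
    ring
  have hsub : (∑ j ∈ Finset.Icc 2 m, (m.choose j : ℝ) * ((j - 2).choose n : ℝ))
      = ∑ k ∈ Finset.Icc (n + 2) m, (m.choose k : ℝ) * ((k - 2).choose n : ℝ) := by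
    refine (Finset.sum_subset (Finset.Icc_subset_Icc_left (by omega)) ?_).symm
    intro j hj hj'
    have h1 := Finset.mem_Icc.mp hj
    have h2 : j < n + 2 := by
      by_contra h
      exact hj' (Finset.mem_Icc.mpr ⟨by omega, h1.2⟩)
    have : j - 2 < n := by omega
    rw [Nat.choose_eq_zero_of_lt this]
    simp
  rw [hdesc, hsub]
  have hfac : (n.factorial : ℝ) ≠ 0 := Nat.cast_ne_zero.mpr n.factorial_ne_zero
  have hfs : ((n + 1).factorial : ℝ) = ((n : ℝ) + 1) * (n.factorial : ℝ) := by
    rw [Nat.factorial_succ]; push_cast; ring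
  push_cast
  rw [hfs]
  field_simp
  ring
end

section
/- Let R be a nontrivial commutative ring that is a ℂ-algebra, let c ∈ ℂ, and let N ∈ R be nilpotent. Then algebraMap ℂ R (exp_ℂ(2πi·c)) · exp((2πi)·N) = 1 in R if and only if c is an integer (there exists k ∈ ℤ with c = k) and N = 0. (This is the appendix theorem identifying the kernel of the even exponential map exp: O_{M,0} → O*_{M,0} with the locally constant ℤ-valued functions: for f_0 = f_∅ + N with f_∅ the reduced part and N the nilpotent part, exp(2πi f_0) = 1 forces f_∅ ∈ ℤ and N = 0.) -/
/-- The exponential of a nilpotent element of a `ℂ`-algebra: the finite sum `∑ x^k/k!`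
truncated at the nilpotency class of `x` (this is Mathlib's `IsNilpotent.exp`). -/
noncomputable def nilpExp {R : Type*} [Ring R] [Algebra ℂ R] (x : R) : R :=
  ∑ i ∈ Finset.range (nilpotencyClass x), ((i.factorial : ℂ)⁻¹) • x ^ i

lemma nilpExp_zero {R : Type*} [Ring R] [Nontrivial R] [Algebra ℂ R] :
    nilpExp (0 : R) = 1 := by
  simp [nilpExp]

lemma nilpExp_sub_one_nilpotent {R : Type*} [CommRing R] [Nontrivial R] [Algebra ℂ R]
    {x : R} (hx : IsNilpotent x) : IsNilpotent (nilpExp x - 1) := by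
  obtain ⟨m, hm⟩ : ∃ m, nilpotencyClass x = m + 1 :=
    Nat.exists_eq_add_of_lt (pos_nilpotencyClass_iff.mpr hx) |>.imp fun m h => by omega
  rw [nilpExp, hm, Finset.sum_range_succ']
  simp only [pow_zero, Nat.factorial_zero, Nat.cast_one, inv_one, one_smul,
    add_sub_cancel_right]
  refine isNilpotent_sum fun i _ => ?_
  exact IsNilpotent.smul (hx.pow_succ i) _

lemma nilpExp_eq_one_iff {R : Type*} [CommRing R] [Nontrivial R] [Algebra ℂ R]
    {x : R} (hx : IsNilpotent x) : nilpExp x = 1 ↔ x = 0 := by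
  constructor
  · intro h
    by_contra hne
    obtain ⟨m, hm⟩ : ∃ m, nilpotencyClass x = m + 2 := by
      have h1 : nilpotencyClass x ≠ 1 := by simpa using hne
      have h0 : 0 < nilpotencyClass x := pos_nilpotencyClass_iff.mpr hx
      exact ⟨nilpotencyClass x - 2, by omega⟩
    rw [nilpExp, hm, Finset.sum_range_succ'] at h
    simp only [pow_zero, Nat.factorial_zero, Nat.cast_one, inv_one, one_smul] at h
    have hsum : ∑ i ∈ Finset.range (m + 1),
        (((i + 1).factorial : ℂ)⁻¹) • x ^ (i + 1) = 0 := by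
      linear_combination (norm := abel) h
    have hfac : ∑ i ∈ Finset.range (m + 1),
        (((i + 1).factorial : ℂ)⁻¹) • x ^ (i + 1)
        = x * ∑ i ∈ Finset.range (m + 1), (((i + 1).factorial : ℂ)⁻¹) • x ^ i := by
      rw [Finset.mul_sum]
      refine Finset.sum_congr rfl fun i _ => ?_
      rw [mul_smul_comm, pow_succ, mul_comm]
    have hunit : IsUnit (∑ i ∈ Finset.range (m + 1),
        (((i + 1).factorial : ℂ)⁻¹) • x ^ i) := by
      rw [Finset.sum_range_succ'] at *
      simp only [pow_zero, Nat.zero_add, Nat.factorial_one, Nat.cast_one, inv_one, one_smul]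
      rw [add_comm]
      refine IsNilpotent.isUnit_one_add (isNilpotent_sum fun i _ => ?_)
      exact IsNilpotent.smul (hx.pow_succ i) _
    rw [hfac] at hsum
    exact hne ((hunit.mul_left_eq_zero).mp hsum)
  · rintro rfl; exact nilpExp_zero

theorem stmt_16 {R : Type*} [CommRing R] [Nontrivial R] [Algebra ℂ R]
    (c : ℂ) (N : R) (hN : IsNilpotent N) :
    algebraMap ℂ R (Complex.exp (2 * (Real.pi : ℂ) * Complex.I * c)) *
        nilpExp ((2 * (Real.pi : ℂ) * Complex.I) • N) = 1 ↔
      (∃ k : ℤ, c = (k : ℂ)) ∧ N = 0 := by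
  have hM : IsNilpotent ((2 * (Real.pi : ℂ) * Complex.I) • N) := IsNilpotent.smul hN _
  constructor
  · intro h
    set a := algebraMap ℂ R (Complex.exp (2 * (Real.pi : ℂ) * Complex.I * c)) with ha
    have hm := nilpExp_sub_one_nilpotent hM
    -- a - 1 = -(a * (nilpExp M - 1)) is nilpotent
    have haone : IsNilpotent (a - 1) := by
      have : a - 1 = -(a * (nilpExp ((2 * (Real.pi : ℂ) * Complex.I) • N) - 1)) := by
        rw [mul_sub, h]; ring
      rw [this]
      exact (((Commute.all _ _).isNilpotent_mul_left hm)).neg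
    -- transfer to ℂ via injectivity
    have hinj : Function.Injective (algebraMap ℂ R) := (algebraMap ℂ R).injective
    have hexp1 : Complex.exp (2 * (Real.pi : ℂ) * Complex.I * c) = 1 := by
      obtain ⟨n, hn⟩ := haone
      have : algebraMap ℂ R ((Complex.exp (2 * (Real.pi : ℂ) * Complex.I * c) - 1) ^ n) = 0 := by
        rw [map_pow, map_sub, map_one]; exact hn
      have := hinj (this.trans (map_zero (algebraMap ℂ R)).symm)
      have hz : Complex.exp (2 * (Real.pi : ℂ) * Complex.I * c) - 1 = 0 :=
        pow_eq_zero_iff'.mp (by simpa using this) |>.1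
      exact sub_eq_zero.mp hz
    have hk : ∃ k : ℤ, c = (k : ℂ) := by
      obtain ⟨n, hn⟩ := Complex.exp_eq_one_iff.mp hexp1
      refine ⟨n, ?_⟩
      have h2 : (2 * (Real.pi : ℂ) * Complex.I) ≠ 0 :=
        mul_ne_zero (mul_ne_zero two_ne_zero (by exact_mod_cast Real.pi_ne_zero))
          Complex.I_ne_zero
      have hc : c * (2 * (Real.pi : ℂ) * Complex.I) = (n : ℂ) * (2 * (Real.pi : ℂ) * Complex.I) := by
        linear_combination hn
      exact mul_right_cancel₀ h2 hc
    have haeq : a = 1 := by rw [ha, hexp1, map_one]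
    rw [haeq, one_mul] at h
    have hMz := (nilpExp_eq_one_iff hM).mp h
    have hN0 : N = 0 := by
      have h2 : (2 * (Real.pi : ℂ) * Complex.I) ≠ 0 :=
        mul_ne_zero (mul_ne_zero two_ne_zero (by exact_mod_cast Real.pi_ne_zero))
          Complex.I_ne_zero
      exact (smul_eq_zero.mp hMz).resolve_left h2
    exact ⟨hk, hN0⟩
  · rintro ⟨⟨k, rfl⟩, rfl⟩
    rw [smul_zero, nilpExp_zero, mul_one]
    have : Complex.exp (2 * (Real.pi : ℂ) * Complex.I * k) = 1 := by
      rw [show (2 * (Real.pi : ℂ) * Complex.I * k) = k * (2 * Real.pi * Complex.I) by ring]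
      exact Complex.exp_int_mul_two_pi_mul_I k
    rw [this, map_one]
end
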